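/- Let (X, μ) be a measure space, let N ≥ 2 be an integer, and let E_0 ⊆ E_1 ⊆ ... ⊆ E_N be measurable subsets of X with μ(E_N) < ∞. If ε is a real number with 1/N ≤ ε ≤ 1/2, then there exist indices 0 ≤ n < m ≤ N with m − n ≥ εN such that μ(E_m \ E_n) ≤ C·ε·μ(E_N) for some absolute constant C (one may take C = 3). -/

import Mathlib

open MeasureTheory Finset ENNReal

lemma keyineq (t k n : ℝ) (h1 : 1 ≤ t) (h2 : t ≤ k) (h3 : k ≤ t+1)
    (h4 : 2*k ≤ n+1) (h5 : 2*t ≤ n) : k*n ≤ 3*t*(n+1-k) := by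
  nlinarith [mul_nonneg (sub_nonneg.2 h3) (by linarith : (0:ℝ) ≤ n+1-2*k),
    mul_nonneg (by linarith : (0:ℝ) ≤ t-1) (by linarith : (0:ℝ) ≤ n-2*t),
    mul_nonneg (by linarith : (0:ℝ) ≤ t-1) (by linarith : (0:ℝ) ≤ t+1-k),
    mul_nonneg (sub_nonneg.2 h2) (by linarith : (0:ℝ) ≤ n-2*t),
    sq_nonneg (t-1)]

/-- Quantitative pigeonhole version of continuity from below for measures. -/
theorem stmt0 {X : Type*} [MeasurableSpace X] (μ : Measure X) (N : ℕ) (hN : 2 ≤ N)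
    (E : ℕ → Set X) (hmeas : ∀ n ≤ N, MeasurableSet (E n))
    (hmono : ∀ n m, n ≤ m → m ≤ N → E n ⊆ E m)
    (hfin : μ (E N) < ⊤) (ε : ℝ) (hε1 : 1 / (N : ℝ) ≤ ε) (hε2 : ε ≤ 1 / 2) :
    ∃ n m : ℕ, n < m ∧ m ≤ N ∧ ε * N ≤ ((m - n : ℕ) : ℝ) ∧
      μ (E m \ E n) ≤ ENNReal.ofReal (3 * ε) * μ (E N) := by
  have hN0 : (0:ℝ) < N := by positivity
  have ht1 : 1 ≤ ε * N := by rw [div_le_iff₀ hN0] at hε1; linarith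
  have htpos : (0:ℝ) < ε * N := by linarith
  have hεpos : 0 < ε := lt_of_lt_of_le (by positivity) hε1
  set k := ⌈ε * N⌉₊ with hkdef
  have hk1 : 1 ≤ k := Nat.one_le_iff_ne_zero.2 (Nat.ceil_pos.2 htpos).ne'
  have hkt : (ε*N : ℝ) ≤ k := Nat.le_ceil _
  have hkt2 : (k:ℝ) < ε*N + 1 := Nat.ceil_lt_add_one htpos.le
  have h2k : 2*k ≤ N+1 := by
    have h2 : ((2*k : ℕ) : ℝ) < ((N+2 : ℕ) : ℝ) := by push_cast; nlinarith
    have := Nat.cast_lt.mp h2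
    omega
  have hkN : k ≤ N := by omega
  set M := N - k + 1 with hMdef
  have hM : (M:ℝ) = (N:ℝ) + 1 - k := by
    have : ((M:ℕ):ℝ) = ((N - k : ℕ) : ℝ) + 1 := by rw [hMdef, Nat.cast_succ]
    rw [this, Nat.cast_sub hkN]; ring
  -- key real inequality
  have hkey : (k:ℝ) ≤ 3 * ε * M := by
    have hk3 : (k:ℝ) ≤ ε*N + 1 := hkt2.le
    have h4 : 2*(k:ℝ) ≤ (N:ℝ)+1 := by exact_mod_cast Nat.cast_le.2 h2k |>.trans_eq (by push_cast; ring)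
    have h5 : 2*(ε*N) ≤ (N:ℝ) := by nlinarith
    have := keyineq (ε*N) k N ht1 hkt hk3 h4 h5
    rw [hM]
    have h6 : (k:ℝ) * N ≤ (3 * ε * ((N:ℝ)+1-k)) * N := by nlinarith
    exact le_of_mul_le_mul_right h6 hN0
  -- measure facts
  have hmeas' : ∀ j, j < N → MeasurableSet (E (j+1) \ E j) := fun j hj =>
    (hmeas _ hj).diff (hmeas _ hj.le)
  have hESub : ∀ j, j < N → E (j+1) \ E j ⊆ E N := fun j hj =>
    Set.diff_subset.trans (hmono _ _ hj le_rfl)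
  have hS : ∑ j ∈ range N, μ (E (j+1) \ E j) ≤ μ (E N) := by
    have hdisj : (↑(range N) : Set ℕ).PairwiseDisjoint (fun j => E (j+1) \ E j) := by
      intro i hi j hj hij
      simp only [Finset.coe_range, Set.mem_Iio] at hi hj
      rcases hij.lt_or_gt with h | h
      · exact Set.disjoint_left.2 fun x hx hx' =>
          hx'.2 (hmono _ _ h (by omega) hx.1)
      · exact Set.disjoint_right.2 fun x hx hx' =>
          hx'.2 (hmono _ _ h (by omega) hx.1)
    rw [← measure_biUnion_finset hdisj (fun j hj => hmeas' j (mem_range.mp hj))]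
    exact measure_mono (Set.iUnion₂_subset fun j hj => hESub j (mem_range.mp hj))
  have hsub : ∀ a b : ℕ, a ≤ b → b ≤ N →
      E b \ E a ⊆ ⋃ j ∈ Finset.Ico a b, (E (j+1) \ E j) := by
    intro a b hab
    induction b, hab using Nat.le_induction with
    | base => intro _; simp
    | succ b hb ih =>
      intro hbN x hx
      by_cases hxb : x ∈ E b
      · have hx' := ih (by omega) ⟨hxb, hx.2⟩
        simp only [Set.mem_iUnion, exists_prop] at hx' ⊢
        obtain ⟨j, hj, hxj⟩ := hx'
        exact ⟨j, by simp only [Finset.mem_Ico] at hj ⊢; omega, hxj⟩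
      · simp only [Set.mem_iUnion, exists_prop]
        exact ⟨b, by simp [Finset.mem_Ico]; omega, ⟨hx.1, hxb⟩⟩
  have hfone : ∀ n, n + k ≤ N →
      μ (E (n+k) \ E n) ≤ ∑ j ∈ Finset.Ico n (n+k), μ (E (j+1) \ E j) := by
    intro n hn
    calc μ (E (n+k) \ E n) ≤ μ (⋃ j ∈ Finset.Ico n (n+k), (E (j+1) \ E j)) :=
          measure_mono (hsub n (n+k) (Nat.le_add_right _ _) hn)
      _ ≤ ∑ j ∈ Finset.Ico n (n+k), μ (E (j+1) \ E j) := measure_biUnion_finset_le _ _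
  -- total sum bound
  have htot : ∑ n ∈ range M, μ (E (n+k) \ E n) ≤ (k : ℝ≥0∞) * μ (E N) := by
    have step1 : ∑ n ∈ range M, μ (E (n+k) \ E n)
        ≤ ∑ n ∈ range M, ∑ j ∈ Finset.Ico n (n+k), μ (E (j+1) \ E j) := by
      refine Finset.sum_le_sum fun n hn => hfone n ?_
      have := mem_range.mp hn; omega
    have step2 : ∑ n ∈ range M, ∑ j ∈ Finset.Ico n (n+k), μ (E (j+1) \ E j)
        = ∑ i ∈ range k, ∑ n ∈ range M, μ (E (n+i+1) \ E (n+i)) := by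
      rw [← Finset.sum_comm]
      refine Finset.sum_congr rfl fun n hn => ?_
      rw [Finset.sum_Ico_eq_sum_range]
      simp [Nat.add_sub_cancel_left]
    have step3 : ∀ i, i < k → ∑ n ∈ range M, μ (E (n+i+1) \ E (n+i))
        ≤ μ (E N) := by
      intro i hi
      have : ∑ n ∈ range M, μ (E (n+i+1) \ E (n+i))
          = ∑ j ∈ Finset.Ico i (i+M), μ (E (j+1) \ E j) := by
        rw [Finset.sum_Ico_eq_sum_range]
        simp only [Nat.add_sub_cancel_left]
        exact Finset.sum_congr rfl fun n _ => by rw [Nat.add_comm i n]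
      rw [this]
      refine le_trans (Finset.sum_le_sum_of_subset ?_) hS
      intro j hj
      simp only [Finset.mem_Ico] at hj
      simp only [Finset.mem_range]
      omega
    calc ∑ n ∈ range M, μ (E (n+k) \ E n)
        ≤ ∑ i ∈ range k, ∑ n ∈ range M, μ (E (n+i+1) \ E (n+i)) := step1.trans step2.le
      _ ≤ ∑ _i ∈ range k, μ (E N) := Finset.sum_le_sum fun i hi => step3 i (mem_range.mp hi)
      _ = (k : ℝ≥0∞) * μ (E N) := by simp [Finset.sum_const, nsmul_eq_mul]
  -- pigeonhole in ℝ
  have hμfin : μ (E N) ≠ ⊤ := hfin.ne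
  have hffin : ∀ n ∈ range M, μ (E (n+k) \ E n) ≠ ⊤ := by
    intro n hn
    have hnk : n + k ≤ N := by have := mem_range.mp hn; omega
    exact (lt_of_le_of_lt (measure_mono (Set.diff_subset.trans (hmono _ _ hnk le_rfl))) hfin).ne
  have hreal : ∑ n ∈ range M, (μ (E (n+k) \ E n)).toReal
      ≤ ∑ _n ∈ range M, (3 * ε * (μ (E N)).toReal) := by
    rw [← ENNReal.toReal_sum hffin, Finset.sum_const, nsmul_eq_mul]
    have h1 : (∑ n ∈ range M, μ (E (n+k) \ E n)).toReal ≤ ((k : ℝ≥0∞) * μ (E N)).toReal :=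
      ENNReal.toReal_mono (ENNReal.mul_ne_top (by simp) hμfin) htot
    rw [ENNReal.toReal_mul] at h1
    simp only [ENNReal.toReal_natCast] at h1
    refine h1.trans ?_
    rw [Finset.card_range]
    have := ENNReal.toReal_nonneg (a := μ (E N))
    nlinarith [hkey]
  obtain ⟨n₀, hn₀mem, hn₀⟩ := Finset.exists_le_of_sum_le (by
      refine Finset.nonempty_range_iff.mpr ?_; omega) hreal
  have hn₀M := mem_range.mp hn₀mem
  refine ⟨n₀, n₀ + k, by omega, by omega, ?_, ?_⟩
  · simp only [Nat.add_sub_cancel_left]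
    exact hkt
  · have hfinn : μ (E (n₀+k) \ E n₀) ≠ ⊤ := hffin n₀ hn₀mem
    calc μ (E (n₀+k) \ E n₀) = ENNReal.ofReal (μ (E (n₀+k) \ E n₀)).toReal :=
          (ENNReal.ofReal_toReal hfinn).symm
      _ ≤ ENNReal.ofReal (3 * ε * (μ (E N)).toReal) := ENNReal.ofReal_le_ofReal hn₀
      _ = ENNReal.ofReal (3 * ε) * ENNReal.ofReal ((μ (E N)).toReal) :=
          ENNReal.ofReal_mul (by linarith)
      _ = ENNReal.ofReal (3 * ε) * μ (E N) := by rw [ENNReal.ofReal_toReal hμfin]
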